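/- Let G be a group of exponent dividing 4, metabelian, and nilpotent of class at most 4. Then γ₃(G) has exponent dividing 2, i.e., h² = 1 for every h ∈ γ₃(G). -/

import Mathlib

open scoped commutatorElement

theorem gamma3_exponent_two {G : Type*} [Group G]
    (hexp : ∀ x : G, x ^ 4 = 1)
    (hmet : ∀ a ∈ (⊤ : Subgroup G).lowerCentralSeries 1, ∀ b ∈ (⊤ : Subgroup G).lowerCentralSeries 1, a * b = b * a)
    (hnil : (⊤ : Subgroup G).lowerCentralSeries 4 = ⊥) :
    ∀ h ∈ (⊤ : Subgroup G).lowerCentralSeries 2, h ^ 2 = 1 := by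
  have hmem : ∀ n : ℕ, ∀ c ∈ (⊤ : Subgroup G).lowerCentralSeries n, ∀ z : G,
      ⁅c, z⁆ ∈ (⊤ : Subgroup G).lowerCentralSeries (n + 1) := by
    intro n c hc z
    rw [Subgroup.lowerCentralSeries_succ]
    exact Subgroup.subset_closure ⟨c, hc, z, Subgroup.mem_top z, rfl⟩
  have quad : ∀ c ∈ (⊤ : Subgroup G).lowerCentralSeries 1, ∀ z : G,
      ⁅⁅c, z⁆, z⁆ ^ 2 * ⁅c, z⁆ ^ 2 = 1 := by
    intro c hc z
    set t := ⁅c, z⁆ with ht_def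
    set u := ⁅t, z⁆ with hu_def
    have ht2 : t ∈ (⊤ : Subgroup G).lowerCentralSeries 2 := hmem 1 c hc z
    have ht1 : t ∈ (⊤ : Subgroup G).lowerCentralSeries 1 := (⊤ : Subgroup G).lowerCentralSeries_antitone (by norm_num) ht2
    have hu3 : u ∈ (⊤ : Subgroup G).lowerCentralSeries 3 := hmem 2 t ht2 z
    have hu1 : u ∈ (⊤ : Subgroup G).lowerCentralSeries 1 := (⊤ : Subgroup G).lowerCentralSeries_antitone (by norm_num) hu3
    have huz1 : ⁅u, z⁆ = 1 := by
      have h4 : ⁅u, z⁆ ∈ (⊤ : Subgroup G).lowerCentralSeries 4 := hmem 3 u hu3 z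
      rw [hnil] at h4
      exact Subgroup.mem_bot.mp h4
    have huz : u * z = z * u := commutatorElement_eq_one_iff_mul_comm.mp huz1
    have hcz : c * z = t * (z * c) := by rw [ht_def]; group
    have htz : t * z = u * (z * t) := by rw [hu_def]; group
    have hct : c * t = t * c := hmet c hc t ht1
    have hcu : c * u = u * c := hmet c hc u hu1
    have htu : t * u = u * t := hmet t ht1 u hu1
    have hcz' : ∀ x : G, c * (z * x) = t * (z * (c * x)) := by
      intro x; rw [← mul_assoc, hcz, mul_assoc, mul_assoc]
    have htz' : ∀ x : G, t * (z * x) = u * (z * (t * x)) := by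
      intro x; rw [← mul_assoc, htz, mul_assoc, mul_assoc]
    have huz' : ∀ x : G, u * (z * x) = z * (u * x) := by
      intro x; rw [← mul_assoc, huz, mul_assoc]
    have hct' : ∀ x : G, c * (t * x) = t * (c * x) := by
      intro x; rw [← mul_assoc, hct, mul_assoc]
    have hcu' : ∀ x : G, c * (u * x) = u * (c * x) := by
      intro x; rw [← mul_assoc, hcu, mul_assoc]
    have htu' : ∀ x : G, t * (u * x) = u * (t * x) := by
      intro x; rw [← mul_assoc, htu, mul_assoc]
    have h4 : t ^ 4 = 1 := hexp t
    have e : (z * c) ^ 4 = z ^ 4 * (u ^ 4 * (u ^ 4 * (u ^ 2 * (t ^ 4 * (t ^ 2 * c ^ 4))))) := by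
      calc (z * c) ^ 4 = (z * c) * ((z * c) * ((z * c) * (z * c))) := by
              simp [pow_succ, mul_assoc]
        _ = z * (z * (z * (z * (u * (u * (u * (u * (u * (u * (u * (u * (u * (u *
              (t * (t * (t * (t * (t * (t * (c * (c * (c * c)))))))))))))))))))))) := by
            simp only [mul_assoc, hcz', htz', huz', hct', hcu', htu', hcz, htz, huz, hct,
              hcu, htu]
        _ = z ^ 4 * (u ^ 4 * (u ^ 4 * (u ^ 2 * (t ^ 4 * (t ^ 2 * c ^ 4))))) := by
              simp [pow_succ, mul_assoc]
    rw [hexp (z * c), hexp z, hexp u, hexp c, h4] at e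
    simpa using e.symm
  have key : ∀ c ∈ (⊤ : Subgroup G).lowerCentralSeries 1, ∀ z : G, ⁅c, z⁆ ^ 2 = 1 := by
    intro c hc z
    have ht2 : ⁅c, z⁆ ∈ (⊤ : Subgroup G).lowerCentralSeries 2 := hmem 1 c hc z
    have ht1 : ⁅c, z⁆ ∈ (⊤ : Subgroup G).lowerCentralSeries 1 :=
      (⊤ : Subgroup G).lowerCentralSeries_antitone (by norm_num) ht2
    have hu3 : ⁅⁅c, z⁆, z⁆ ∈ (⊤ : Subgroup G).lowerCentralSeries 3 := hmem 2 ⁅c, z⁆ ht2 z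
    have huz1 : ⁅⁅⁅c, z⁆, z⁆, z⁆ = 1 := by
      have h4 : ⁅⁅⁅c, z⁆, z⁆, z⁆ ∈ (⊤ : Subgroup G).lowerCentralSeries 4 := hmem 3 _ hu3 z
      rw [hnil] at h4
      exact Subgroup.mem_bot.mp h4
    have hu2 : ⁅⁅c, z⁆, z⁆ ^ 2 = 1 := by
      have := quad ⁅c, z⁆ ht1 z
      rwa [huz1, one_pow, one_mul] at this
    have := quad c hc z
    rwa [hu2, one_mul] at this
  let K : Subgroup G :=
    { carrier := {x | x ∈ (⊤ : Subgroup G).lowerCentralSeries 1 ∧ x ^ 2 = 1}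
      one_mem' := ⟨Subgroup.one_mem _, one_pow 2⟩
      mul_mem' := by
        rintro a b ⟨ha1, ha2⟩ ⟨hb1, hb2⟩
        refine ⟨mul_mem ha1 hb1, ?_⟩
        have comm : Commute a b := hmet a ha1 b hb1
        rw [comm.mul_pow, ha2, hb2, one_mul]
      inv_mem' := by
        rintro a ⟨ha1, ha2⟩
        exact ⟨inv_mem ha1, by rw [inv_pow, ha2, inv_one]⟩ }
  have hle : (⊤ : Subgroup G).lowerCentralSeries 2 ≤ K := by
    rw [show (2 : ℕ) = 1 + 1 from rfl, Subgroup.lowerCentralSeries_succ]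
    rw [Subgroup.commutator_def, Subgroup.closure_le]
    rintro x ⟨p, hp, q, -, rfl⟩
    have hx2 : ⁅p, q⁆ ∈ (⊤ : Subgroup G).lowerCentralSeries 2 := hmem 1 p hp q
    exact ⟨(⊤ : Subgroup G).lowerCentralSeries_antitone (by norm_num) hx2, key p hp q⟩
  intro h hh
  exact (hle hh).2
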